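/- Let J be a linear complex structure on ℝ^{2n} (a linear endomorphism with J² = −I) and let α > 0 be such that ω₀(Ju,u) ≥ α|u|² for every u ∈ ℝ^{2n}. Then the endomorphism J + J₀ is invertible and ‖(J+J₀)^{-1}‖ ≤ 1/(1+α). -/

import Mathlib

/- ℝ^{2n} is modeled as ℂⁿ via the identification (q,p) ↦ q + ip, under which the
standard complex structure J₀ becomes multiplication by i, the Euclidean scalar
product is the real part of the Hermitian inner product, and the standard symplectic
form ω₀ is minus the imaginary part of the Hermitian inner product (so that
u·v = ω₀(J₀u, v)). -/

noncomputable section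

/-- ℝ^{2n}, identified with ℂⁿ. -/
abbrev Esp (n : ℕ) := EuclideanSpace ℂ (Fin n)

/-- The standard symplectic form ω₀ on ℝ^{2n} ≅ ℂⁿ. -/
def omega0 {n : ℕ} (u v : Esp n) : ℝ := -((inner ℂ u v : ℂ).im)

/-- The standard complex structure J₀ on ℝ^{2n} ≅ ℂⁿ (multiplication by i),
as a continuous ℝ-linear endomorphism. -/
def Jstd (n : ℕ) : Esp n →L[ℝ] Esp n :=
  (Complex.I • (1 : Esp n →L[ℂ] Esp n)).restrictScalars ℝ

/-- If `J` is a linear complex structure on ℝ^{2n} and `α > 0`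
satisfies `ω₀(Ju,u) ≥ α|u|²` for all `u`, then `J + J₀` is invertible and
`‖(J+J₀)⁻¹‖ ≤ 1/(1+α)`. -/
theorem statement1 {n : ℕ} (J : Esp n →L[ℝ] Esp n)
    (hJ2 : ∀ u : Esp n, J (J u) = -u)
    (α : ℝ) (hα : 0 < α)
    (hbound : ∀ u : Esp n, α * ‖u‖ ^ 2 ≤ omega0 (J u) u) :
    ∃ K : Esp n →L[ℝ] Esp n,
      (J + Jstd n).comp K = ContinuousLinearMap.id ℝ (Esp n) ∧
      K.comp (J + Jstd n) = ContinuousLinearMap.id ℝ (Esp n) ∧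
      ‖K‖ ≤ 1 / (1 + α) := by
  set A : Esp n →L[ℝ] Esp n := J + Jstd n with hA
  have key : ∀ u : Esp n, (1 + α) * ‖u‖ ≤ ‖A u‖ := by
    intro u
    rcases eq_or_ne u 0 with rfl | hu
    · simp
    have hJstd : Jstd n u = Complex.I • u := rfl
    have h1 : omega0 (Jstd n u) u = ‖u‖ ^ 2 := by
      rw [hJstd]
      simp [omega0, inner_smul_left, Complex.ext_iff, inner_self_eq_norm_sq_to_K]
      norm_cast
    have hadd : omega0 (A u) u = omega0 (J u) u + omega0 (Jstd n u) u := by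
      simp only [hA, ContinuousLinearMap.add_apply, omega0, inner_add_left,
        Complex.add_im]
      ring
    have h2 : (1 + α) * ‖u‖ ^ 2 ≤ omega0 (A u) u := by
      have := hbound u
      rw [hadd, h1]; nlinarith
    have h3 : omega0 (A u) u ≤ ‖A u‖ * ‖u‖ := by
      calc omega0 (A u) u ≤ |((inner ℂ (A u) u : ℂ)).im| := by
            rw [omega0]; exact neg_le_abs _
        _ ≤ ‖(inner ℂ (A u) u : ℂ)‖ := Complex.abs_im_le_norm _
        _ = ‖(inner ℂ (A u) u : ℂ)‖ := rfl
        _ ≤ ‖A u‖ * ‖u‖ := norm_inner_le_norm _ _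
    have hu' : 0 < ‖u‖ := norm_pos_iff.mpr hu
    nlinarith
  have hinj : Function.Injective A := by
    intro x y hxy
    have h0 : A (x - y) = 0 := by rw [map_sub, hxy, sub_self]
    have := key (x - y)
    rw [h0, norm_zero] at this
    have : ‖x - y‖ ≤ 0 := by nlinarith
    have : x - y = 0 := by
      rw [← norm_le_zero_iff]; exact this
    exact sub_eq_zero.mp this
  have hsurj : Function.Surjective A :=
    LinearMap.injective_iff_surjective.mp hinj
  let e : Esp n ≃ₗ[ℝ] Esp n := LinearEquiv.ofBijective (A : Esp n →ₗ[ℝ] Esp n) ⟨hinj, hsurj⟩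
  let K : Esp n →L[ℝ] Esp n := LinearMap.toContinuousLinearMap e.symm.toLinearMap
  have hKv : ∀ v : Esp n, A (K v) = v := fun v => e.apply_symm_apply v
  refine ⟨K, ?_, ?_, ?_⟩
  · exact ContinuousLinearMap.ext hKv
  · exact ContinuousLinearMap.ext fun v => e.symm_apply_apply v
  · refine ContinuousLinearMap.opNorm_le_bound K (by positivity) fun v => ?_
    have h := key (K v)
    rw [hKv v] at h
    rw [div_mul_eq_mul_div, le_div_iff₀ (by linarith)]
    linarith [mul_comm (1 + α) ‖K v‖ ▸ h]
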